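/- Claim B: for every finite sequence of update parameters (i₁,t₁),…,(i_n,t_n) with all t_j > 0, if the coupled flow Φ_n = U_{i_n,t_n} ∘ ⋯ ∘ U_{i₁,t₁} sends the state (0,N) to (c,p), then for every starting state y ∈ S one has Φ_n(y) ∉ ψ_B(c,p); that is, no trajectory started in S occupies a state (x_C, x_P) with x_P > p, nor a state with x_C > c and x_C + x_P > c + p. -/

import Mathlib

/-- The RMM state space `S = {(x_C, x_P) : 0 ≤ x_C ≤ M, 0 ≤ x_P, x_C + x_P ≤ N}`. -/
def RMMState (N M : ℕ) : Set (ℤ × ℤ) :=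
  {x | 0 ≤ x.1 ∧ x.1 ≤ (M : ℤ) ∧ 0 ≤ x.2 ∧ x.1 + x.2 ≤ (N : ℤ)}

/-- The reaction rates `λ₁, λ₂, λ₃, λ₄` (indexed by `Fin 4`, so reaction `Rᵢ` has index `i-1`). -/
noncomputable def RMMrate (k₁ k₂ k₃ k₄ : ℝ) (N M : ℕ) (i : Fin 4) (x : ℤ × ℤ) : ℝ :=
  match i with
  | 0 => k₁ * ((N : ℝ) - (x.1 : ℝ) - (x.2 : ℝ)) * ((M : ℝ) - (x.1 : ℝ))
  | 1 => k₂ * (x.1 : ℝ)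
  | 2 => k₃ * (x.1 : ℝ)
  | 3 => k₄ * (x.2 : ℝ) * ((M : ℝ) - (x.1 : ℝ))

/-- The reaction displacements `R₁ = (1,0)`, `R₂ = (-1,0)`, `R₃ = (-1,1)`, `R₄ = (1,-1)`. -/
def RMMdisp : Fin 4 → ℤ × ℤ
  | 0 => (1, 0)
  | 1 => (-1, 0)
  | 2 => (-1, 1)
  | 3 => (1, -1)

/-- The coupled one-step update `U_{i,t}`: move by `Rᵢ` if `λᵢ(x) ≥ t`, stay put otherwise. -/
noncomputable def RMMupdate (k₁ k₂ k₃ k₄ : ℝ) (N M : ℕ) (i : Fin 4) (t : ℝ)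
    (x : ℤ × ℤ) : ℤ × ℤ :=
  if RMMrate k₁ k₂ k₃ k₄ N M i x ≥ t then x + RMMdisp i else x

/-- Claim-A exclusion region `ψ_A(c,p)`. -/
def psiA (c p : ℤ) : Set (ℤ × ℤ) :=
  {x | x.2 < p} ∪ {x | x.1 < c ∧ x.1 + x.2 ≤ c + p}

/-- Claim-B exclusion region `ψ_B(c,p)`. -/
def psiB (c p : ℤ) : Set (ℤ × ℤ) :=
  {x | x.2 > p} ∪ {x | x.1 > c ∧ x.1 + x.2 > c + p}

/-- The coupled flow: composition of the one-step updates along a list of parameters. -/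
noncomputable def RMMflow (k₁ k₂ k₃ k₄ : ℝ) (N M : ℕ) (L : List (Fin 4 × ℝ))
    (x : ℤ × ℤ) : ℤ × ℤ :=
  L.foldl (fun y q => RMMupdate k₁ k₂ k₃ k₄ N M q.1 q.2 y) x

lemma pos_factors {k u v t : ℝ} (hk : 0 < k) (hu : 0 ≤ u) (hv : 0 ≤ v) (ht : 0 < t)
    (h : t ≤ k * u * v) : 0 < u ∧ 0 < v := by
  constructor <;> by_contra hne <;> push_neg at hne <;>
    nlinarith [mul_nonneg hk.le hu, mul_nonneg hk.le hv]

lemma pos_factor1 {k u t : ℝ} (hk : 0 < k) (ht : 0 < t) (h : t ≤ k * u) : 0 < u := by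
  by_contra hne; push_neg at hne
  nlinarith [mul_nonpos_of_nonneg_of_nonpos hk.le hne]

lemma RMMstep (k₁ k₂ k₃ k₄ : ℝ)
    (hk₁ : 0 < k₁) (hk₂ : 0 < k₂) (hk₃ : 0 < k₃) (hk₄ : 0 < k₄)
    (N M : ℕ) (i : Fin 4) (t : ℝ) (ht : 0 < t)
    (y x : ℤ × ℤ) (hy : y ∈ RMMState N M) (hx : x ∈ RMMState N M)
    (h2 : y.2 ≤ x.2) (hs : y.1 + y.2 ≤ x.1 + x.2) :
    RMMupdate k₁ k₂ k₃ k₄ N M i t y ∈ RMMState N M ∧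
    RMMupdate k₁ k₂ k₃ k₄ N M i t x ∈ RMMState N M ∧
    (RMMupdate k₁ k₂ k₃ k₄ N M i t y).2 ≤ (RMMupdate k₁ k₂ k₃ k₄ N M i t x).2 ∧
    (RMMupdate k₁ k₂ k₃ k₄ N M i t y).1 + (RMMupdate k₁ k₂ k₃ k₄ N M i t y).2 ≤
      (RMMupdate k₁ k₂ k₃ k₄ N M i t x).1 + (RMMupdate k₁ k₂ k₃ k₄ N M i t x).2 := by
  obtain ⟨a, b⟩ := y
  obtain ⟨c, p⟩ := x
  obtain ⟨ha0, haM, hb0, habN⟩ := hy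
  obtain ⟨hc0, hcM, hp0, hcpN⟩ := hx
  simp only at *
  -- real casts of all integer hypotheses
  have ra0 : (0:ℝ) ≤ (a:ℝ) := by exact_mod_cast ha0
  have raM : (a:ℝ) ≤ (M:ℝ) := by exact_mod_cast haM
  have rb0 : (0:ℝ) ≤ (b:ℝ) := by exact_mod_cast hb0
  have rabN : (a:ℝ) + (b:ℝ) ≤ (N:ℝ) := by exact_mod_cast habN
  have rc0 : (0:ℝ) ≤ (c:ℝ) := by exact_mod_cast hc0
  have rcM : (c:ℝ) ≤ (M:ℝ) := by exact_mod_cast hcM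
  have rp0 : (0:ℝ) ≤ (p:ℝ) := by exact_mod_cast hp0
  have rcpN : (c:ℝ) + (p:ℝ) ≤ (N:ℝ) := by exact_mod_cast hcpN
  have r2 : (b:ℝ) ≤ (p:ℝ) := by exact_mod_cast h2
  have rs : (a:ℝ) + (b:ℝ) ≤ (c:ℝ) + (p:ℝ) := by exact_mod_cast hs
  fin_cases i <;>
    simp only [RMMupdate, RMMrate, RMMdisp, Fin.isValue, RMMState, Set.mem_setOf_eq,
      Prod.mk_add_mk, Prod.fst, Prod.snd, ge_iff_le] <;>
    split_ifs with hry hrx hrx <;>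
    simp only [Set.mem_setOf_eq]
  -- reaction 1, both jump
  · obtain ⟨hu, hv⟩ := pos_factors hk₁ (by linarith) (by linarith) ht hry
    obtain ⟨hu', hv'⟩ := pos_factors hk₁ (by linarith) (by linarith) ht hrx
    have h1 : a + b < N := by exact_mod_cast (by linarith : (a:ℝ) + b < N)
    have h2 : a < M := by exact_mod_cast (by linarith : (a:ℝ) < M)
    have h3 : c + p < N := by exact_mod_cast (by linarith : (c:ℝ) + p < N)
    have h4 : c < M := by exact_mod_cast (by linarith : (c:ℝ) < M)
    refine ⟨⟨by omega, by omega, by omega, by omega⟩, ⟨by omega, by omega, by omega, by omega⟩, by omega, by omega⟩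
  -- reaction 1, y jumps, x does not
  · obtain ⟨hu, hv⟩ := pos_factors hk₁ (by linarith) (by linarith) ht hry
    have h1 : a + b < N := by exact_mod_cast (by linarith : (a:ℝ) + b < N)
    have h2 : a < M := by exact_mod_cast (by linarith : (a:ℝ) < M)
    have hlt : a + b < c + p := by
      rcases lt_or_eq_of_le hs with h | h
      · exact h
      · exfalso
        have hr : (a:ℝ) + b = (c:ℝ) + p := by exact_mod_cast h
        push_neg at hrx
        have hrx' : k₁ * ((N:ℝ) - ↑a - ↑b) * ((M:ℝ) - ↑c) < t := by
          rw [show ((N:ℝ) - ↑a - ↑b) = ((N:ℝ) - ↑c - ↑p) by linarith]; exact hrx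
        have hac : (0:ℝ) ≤ (a:ℝ) - ↑c := by linarith
        nlinarith [mul_pos hk₁ hu, hac]
    refine ⟨⟨by omega, by omega, by omega, by omega⟩, ⟨hc0, hcM, hp0, hcpN⟩, by omega, by omega⟩
  -- reaction 1, x jumps, y does not
  · obtain ⟨hu', hv'⟩ := pos_factors hk₁ (by linarith) (by linarith) ht hrx
    have h3 : c + p < N := by exact_mod_cast (by linarith : (c:ℝ) + p < N)
    have h4 : c < M := by exact_mod_cast (by linarith : (c:ℝ) < M)
    refine ⟨⟨ha0, haM, hb0, habN⟩, ⟨by omega, by omega, by omega, by omega⟩, by omega, by omega⟩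
  -- reaction 1, neither
  · exact ⟨⟨ha0, haM, hb0, habN⟩, ⟨hc0, hcM, hp0, hcpN⟩, h2, hs⟩
  -- reaction 2, both jump
  · have h1 : 0 < a := by exact_mod_cast (pos_factor1 (by assumption) ht hry)
    have h3 : 0 < c := by exact_mod_cast (pos_factor1 (by assumption) ht hrx)
    refine ⟨⟨by omega, by omega, by omega, by omega⟩, ⟨by omega, by omega, by omega, by omega⟩, by omega, by omega⟩
  -- reaction 2, y jumps, x does not
  · have h1 : 0 < a := by exact_mod_cast (pos_factor1 (by assumption) ht hry)
    refine ⟨⟨by omega, by omega, by omega, by omega⟩, ⟨hc0, hcM, hp0, hcpN⟩, by omega, by omega⟩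
  -- reaction 2, x jumps, y does not
  · have h3 : 0 < c := by exact_mod_cast (pos_factor1 hk₂ ht hrx)
    push_neg at hry
    have hac : a < c := by exact_mod_cast (by nlinarith : (a:ℝ) < (c:ℝ))
    refine ⟨⟨ha0, haM, hb0, habN⟩, ⟨by omega, by omega, by omega, by omega⟩, by omega, by omega⟩
  -- reaction 2, neither
  · exact ⟨⟨ha0, haM, hb0, habN⟩, ⟨hc0, hcM, hp0, hcpN⟩, h2, hs⟩
  -- reaction 3, both jump
  · have h1 : 0 < a := by exact_mod_cast (pos_factor1 (by assumption) ht hry)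
    have h3 : 0 < c := by exact_mod_cast (pos_factor1 (by assumption) ht hrx)
    refine ⟨⟨by omega, by omega, by omega, by omega⟩, ⟨by omega, by omega, by omega, by omega⟩, by omega, by omega⟩
  -- reaction 3, y jumps, x does not
  · have h1 : 0 < a := by exact_mod_cast (pos_factor1 (by assumption) ht hry)
    push_neg at hrx
    have hca : c < a := by exact_mod_cast (by nlinarith : (c:ℝ) < (a:ℝ))
    refine ⟨⟨by omega, by omega, by omega, by omega⟩, ⟨hc0, hcM, hp0, hcpN⟩, by omega, by omega⟩
  -- reaction 3, x jumps, y does not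
  · have h3 : 0 < c := by exact_mod_cast (pos_factor1 (by assumption) ht hrx)
    refine ⟨⟨ha0, haM, hb0, habN⟩, ⟨by omega, by omega, by omega, by omega⟩, by omega, by omega⟩
  -- reaction 3, neither
  · exact ⟨⟨ha0, haM, hb0, habN⟩, ⟨hc0, hcM, hp0, hcpN⟩, h2, hs⟩
  -- reaction 4, both jump
  · obtain ⟨hu, hv⟩ := pos_factors hk₄ rb0 (by linarith) ht hry
    have h1 : 0 < b := by exact_mod_cast hu
    have h2' : a < M := by exact_mod_cast (by linarith : (a:ℝ) < M)
    obtain ⟨hu', hv'⟩ := pos_factors hk₄ rp0 (by linarith) ht hrx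
    have h3 : 0 < p := by exact_mod_cast hu'
    have h4 : c < M := by exact_mod_cast (by linarith : (c:ℝ) < M)
    refine ⟨⟨by omega, by omega, by omega, by omega⟩, ⟨by omega, by omega, by omega, by omega⟩, by omega, by omega⟩
  -- reaction 4, y jumps, x does not
  · obtain ⟨hu, hv⟩ := pos_factors hk₄ rb0 (by linarith) ht hry
    have h1 : 0 < b := by exact_mod_cast hu
    have h2' : a < M := by exact_mod_cast (by linarith : (a:ℝ) < M)
    refine ⟨⟨by omega, by omega, by omega, by omega⟩, ⟨hc0, hcM, hp0, hcpN⟩, by omega, by omega⟩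
  -- reaction 4, x jumps, y does not
  · obtain ⟨hu', hv'⟩ := pos_factors hk₄ rp0 (by linarith) ht hrx
    have h3 : 0 < p := by exact_mod_cast hu'
    have h4 : c < M := by exact_mod_cast (by linarith : (c:ℝ) < M)
    push_neg at hry
    have hbp : b < p := by
      rcases lt_or_eq_of_le h2 with h | h
      · exact h
      · exfalso
        have hr : (b:ℝ) = (p:ℝ) := by exact_mod_cast h
        have hry' : k₄ * (p:ℝ) * ((M:ℝ) - ↑a) < t := by rw [← hr]; exact hry
        have hca : (c:ℝ) < (a:ℝ) := by nlinarith [mul_pos hk₄ hu']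
        have hca' : c < a := by exact_mod_cast hca
        omega
    refine ⟨⟨ha0, haM, hb0, habN⟩, ⟨by omega, by omega, by omega, by omega⟩, by omega, by omega⟩
  -- reaction 4, neither
  · exact ⟨⟨ha0, haM, hb0, habN⟩, ⟨hc0, hcM, hp0, hcpN⟩, h2, hs⟩


lemma RMMflow_rel (k₁ k₂ k₃ k₄ : ℝ)
    (hk₁ : 0 < k₁) (hk₂ : 0 < k₂) (hk₃ : 0 < k₃) (hk₄ : 0 < k₄) (N M : ℕ) :
    ∀ (L : List (Fin 4 × ℝ)), (∀ q ∈ L, 0 < q.2) → ∀ y x : ℤ × ℤ,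
      y ∈ RMMState N M → x ∈ RMMState N M → y.2 ≤ x.2 → y.1 + y.2 ≤ x.1 + x.2 →
      RMMflow k₁ k₂ k₃ k₄ N M L y ∈ RMMState N M ∧
      RMMflow k₁ k₂ k₃ k₄ N M L x ∈ RMMState N M ∧
      (RMMflow k₁ k₂ k₃ k₄ N M L y).2 ≤ (RMMflow k₁ k₂ k₃ k₄ N M L x).2 ∧
      (RMMflow k₁ k₂ k₃ k₄ N M L y).1 + (RMMflow k₁ k₂ k₃ k₄ N M L y).2 ≤
        (RMMflow k₁ k₂ k₃ k₄ N M L x).1 + (RMMflow k₁ k₂ k₃ k₄ N M L x).2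
  | [], _, y, x, hy, hx, h2, hs => ⟨hy, hx, h2, hs⟩
  | q :: L, hL, y, x, hy, hx, h2, hs => by
      obtain ⟨hy', hx', h2', hs'⟩ :=
        RMMstep k₁ k₂ k₃ k₄ hk₁ hk₂ hk₃ hk₄ N M q.1 q.2 (hL q (by simp)) y x hy hx h2 hs
      have := RMMflow_rel k₁ k₂ k₃ k₄ hk₁ hk₂ hk₃ hk₄ N M L
        (fun r hr => hL r (by simp [hr])) _ _ hy' hx' h2' hs'
      simpa [RMMflow, List.foldl_cons] using this

/-- Claim B: if the trajectory started at `(0,N)` ends at `(c,p)`, then no trajectory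
started from a state of `S` ends in the exclusion region `ψ_B(c,p)`. -/
theorem claimB (k₁ k₂ k₃ k₄ : ℝ)
    (hk₁ : 0 < k₁) (hk₂ : 0 < k₂) (hk₃ : 0 < k₃) (hk₄ : 0 < k₄)
    (N M : ℕ) (hM : 1 ≤ M) (hMN : M ≤ N)
    (L : List (Fin 4 × ℝ)) (hL : ∀ q ∈ L, 0 < q.2)
    (c p : ℤ) (hB : RMMflow k₁ k₂ k₃ k₄ N M L (0, (N : ℤ)) = (c, p))
    (y : ℤ × ℤ) (hy : y ∈ RMMState N M) :
    RMMflow k₁ k₂ k₃ k₄ N M L y ∉ psiB c p := by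
  simp only [psiB, Set.mem_union, Set.mem_setOf_eq]
  have hx : ((0 : ℤ), (N : ℤ)) ∈ RMMState N M := by
    refine ⟨le_refl 0, ?_, ?_, ?_⟩ <;> simp <;> omega
  obtain ⟨ha0, haM, hb0, habN⟩ := hy
  have h2 : y.2 ≤ ((0:ℤ), (N:ℤ)).2 := by simp; omega
  have hs : y.1 + y.2 ≤ ((0:ℤ), (N:ℤ)).1 + ((0:ℤ), (N:ℤ)).2 := by simp; omega
  obtain ⟨-, -, H2, Hs⟩ := RMMflow_rel k₁ k₂ k₃ k₄ hk₁ hk₂ hk₃ hk₄ N M L hL y _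
    ⟨ha0, haM, hb0, habN⟩ hx h2 hs
  rw [hB] at H2 Hs
  intro hmem
  rcases hmem with h | ⟨h1, h2'⟩
  · exact absurd H2 (not_le.mpr h)
  · exact absurd Hs (not_le.mpr h2')
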